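/- Let (V,⊗,I) be a symmetric monoidal closed category admitting equalizers and (T,φ,η,μ) a symmetric monoidal monad on V. Given T-algebras (X,x) and (Y,y), the two morphisms [x,1_Y] : [X,Y] → [TX,Y] and [1_{TX},y] ∘ T_{X,Y} : [X,Y] → [TX,Y] are T-algebra morphisms for the pointwise actions on [X,Y] and [TX,Y]; and if H denotes their equalizer in V^T, then for every T-algebra (Z,z) there is a bijection, natural in (Z,z), between T-algebra morphisms (Z,z) → H and morphisms f : Z ⊗ X → Y in V satisfying y ∘ T(f) ∘ φ_{Z,X} = f ∘ (z ⊗ x). -/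

import Mathlib

open CategoryTheory MonoidalCategory Limits

universe v u

/-- A symmetric monoidal monad on a symmetric monoidal category. -/
structure SymMonoidalMonadStr (C : Type u) [Category.{v} C] [MonoidalCategory C]
    [SymmetricCategory C] (T : Monad C) where
  φ : ∀ A B : C, T.obj A ⊗ T.obj B ⟶ T.obj (A ⊗ B)
  ε : 𝟙_ C ⟶ T.obj (𝟙_ C)
  φ_natural : ∀ {A B A' B' : C} (f : A ⟶ A') (g : B ⟶ B'),
    (T.map f ⊗ₘ T.map g) ≫ φ A' B' = φ A B ≫ T.map (f ⊗ₘ g)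
  φ_assoc : ∀ A B C' : C,
    (φ A B ⊗ₘ 𝟙 (T.obj C')) ≫ φ (A ⊗ B) C' ≫ T.map (α_ A B C').hom
      = (α_ (T.obj A) (T.obj B) (T.obj C')).hom ≫ (𝟙 (T.obj A) ⊗ₘ φ B C') ≫ φ A (B ⊗ C')
  φ_left_unit : ∀ A : C,
    (λ_ (T.obj A)).hom = (ε ⊗ₘ 𝟙 (T.obj A)) ≫ φ (𝟙_ C) A ≫ T.map (λ_ A).hom
  φ_right_unit : ∀ A : C,
    (ρ_ (T.obj A)).hom = (𝟙 (T.obj A) ⊗ₘ ε) ≫ φ A (𝟙_ C) ≫ T.map (ρ_ A).hom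
  φ_braided : ∀ A B : C,
    (β_ (T.obj A) (T.obj B)).hom ≫ φ B A = φ A B ≫ T.map (β_ A B).hom
  η_tensor : ∀ A B : C, (T.η.app A ⊗ₘ T.η.app B) ≫ φ A B = T.η.app (A ⊗ B)
  η_unit : ε = T.η.app (𝟙_ C)
  μ_tensor : ∀ A B : C,
    φ (T.obj A) (T.obj B) ≫ T.map (φ A B) ≫ T.μ.app (A ⊗ B)
      = (T.μ.app A ⊗ₘ T.μ.app B) ≫ φ A B
  μ_unit : ε ≫ T.map ε ≫ T.μ.app (𝟙_ C) = ε

variable {V : Type u} [Category.{v} V] [MonoidalCategory V] [SymmetricCategory V]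
  [MonoidalClosed V]

/-- The right evaluation `[X,Y] ⊗ X ⟶ Y` associated to the internal hom. -/
noncomputable def rev (X Y : V) : (ihom X).obj Y ⊗ X ⟶ Y :=
  (β_ ((ihom X).obj Y) X).hom ≫ (ihom.ev X).app Y

/-- The adjunct `Z ⟶ [X,Y]` of a morphism `Z ⊗ X ⟶ Y` with respect to right
evaluation: it is the unique map `h` with `(h ⊗ 𝟙) ≫ rev X Y = g`. -/
noncomputable def radj {Z X Y : V} (g : Z ⊗ X ⟶ Y) : Z ⟶ (ihom X).obj Y :=
  MonoidalClosed.curry ((β_ X Z).hom ≫ g)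

/-- The pointwise `T`-action on the internal hom `[X,Y]`, for `X` an object of `V` and
`y : TY ⟶ Y` a `T`-algebra structure: the adjunct of
`y ∘ T(rev) ∘ φ ∘ (1 ⊗ η_X) : T[X,Y] ⊗ X ⟶ Y`. -/
noncomputable def ptAct (T : Monad V) (M : SymMonoidalMonadStr V T) (X Y : V)
    (y : T.obj Y ⟶ Y) : T.obj ((ihom X).obj Y) ⟶ (ihom X).obj Y :=
  radj ((𝟙 (T.obj ((ihom X).obj Y)) ⊗ₘ T.η.app X) ≫ M.φ ((ihom X).obj Y) X
    ≫ T.map (rev X Y) ≫ y)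

/-- The morphism `T_{X,Y} : [X,Y] ⟶ [TX,TY]`, the adjunct of
`T(rev) ∘ φ ∘ (η_{[X,Y]} ⊗ 1_{TX}) : [X,Y] ⊗ TX ⟶ TY`. -/
noncomputable def THom (T : Monad V) (M : SymMonoidalMonadStr V T) (X Y : V) :
    (ihom X).obj Y ⟶ (ihom (T.obj X)).obj (T.obj Y) :=
  radj ((T.η.app ((ihom X).obj Y) ⊗ₘ 𝟙 (T.obj X)) ≫ M.φ ((ihom X).obj Y) X
    ≫ T.map (rev X Y))

/-- The precomposition map `[x, 1_Y] : [X,Y] ⟶ [X',Y]` induced by `x : X' ⟶ X`. -/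
noncomputable def preHom {X X' : V} (x : X' ⟶ X) (Y : V) :
    (ihom X).obj Y ⟶ (ihom X').obj Y :=
  radj ((((ihom X).obj Y) ◁ x) ≫ rev X Y)

set_option linter.unusedSectionVars false

noncomputable def unrev {Z X Y : V} (k : Z ⟶ (ihom X).obj Y) : Z ⊗ X ⟶ Y :=
  (k ⊗ₘ 𝟙 X) ≫ rev X Y

lemma unrev_eq_uncurry {Z X Y : V} (k : Z ⟶ (ihom X).obj Y) :
    unrev k = (β_ Z X).hom ≫ MonoidalClosed.uncurry k := by
  rw [unrev, rev, MonoidalClosed.uncurry_eq, ← Category.assoc, ← Category.assoc]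
  congr 1
  rw [tensorHom_id, BraidedCategory.braiding_naturality_left]

lemma unrev_radj {Z X Y : V} (g : Z ⊗ X ⟶ Y) : unrev (radj g) = g := by
  rw [unrev_eq_uncurry, radj, MonoidalClosed.uncurry_curry, ← Category.assoc,
    SymmetricCategory.symmetry, Category.id_comp]

lemma unrev_injective {Z X Y : V} {k k' : Z ⟶ (ihom X).obj Y}
    (h : unrev k = unrev k') : k = k' := by
  apply MonoidalClosed.uncurry_injective
  rw [unrev_eq_uncurry, unrev_eq_uncurry] at h
  exact (Iso.cancel_iso_hom_left (β_ Z X) _ _).mp h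

lemma radj_unrev {Z X Y : V} (k : Z ⟶ (ihom X).obj Y) : radj (unrev k) = k :=
  unrev_injective (by rw [unrev_radj])

lemma unrev_comp {W Z X Y : V} (a : W ⟶ Z) (b : Z ⟶ (ihom X).obj Y) :
    unrev (a ≫ b) = (a ⊗ₘ 𝟙 X) ≫ unrev b := by
  rw [unrev, unrev, ← Category.assoc, tensorHom_comp_tensorHom, Category.comp_id]

lemma unrev_ihom_map {Z W Y Y' : V} (k : Z ⟶ (ihom W).obj Y) (g : Y ⟶ Y') :
    unrev (k ≫ (ihom W).map g) = unrev k ≫ g := by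
  rw [unrev_eq_uncurry, unrev_eq_uncurry, MonoidalClosed.uncurry_natural_right,
    Category.assoc]
section Strength
variable (T : Monad V) (M : SymMonoidalMonadStr V T)

/-- The left strength `A ⊗ TB ⟶ T(A ⊗ B)` of a monoidal monad. -/
noncomputable def tstr (A B : V) : A ⊗ T.obj B ⟶ T.obj (A ⊗ B) :=
  (T.η.app A ⊗ₘ 𝟙 (T.obj B)) ≫ M.φ A B

/-- The costrength `TA ⊗ B ⟶ T(A ⊗ B)` of a monoidal monad. -/
noncomputable def cstr (A B : V) : T.obj A ⊗ B ⟶ T.obj (A ⊗ B) :=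
  (𝟙 (T.obj A) ⊗ₘ T.η.app B) ≫ M.φ A B

lemma cstr_nat {A B A' B' : V} (f : A ⟶ A') (g : B ⟶ B') :
    (T.map f ⊗ₘ g) ≫ cstr T M A' B' = cstr T M A B ≫ T.map (f ⊗ₘ g) := by
  have hg : g ≫ T.η.app B' = T.η.app B ≫ T.map g := by
    simpa using T.η.naturality g
  calc (T.map f ⊗ₘ g) ≫ cstr T M A' B'
      = ((T.map f ≫ 𝟙 _) ⊗ₘ (g ≫ T.η.app B')) ≫ M.φ A' B' := by
        rw [cstr, ← Category.assoc, tensorHom_comp_tensorHom]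
    _ = ((𝟙 _ ≫ T.map f) ⊗ₘ (T.η.app B ≫ T.map g)) ≫ M.φ A' B' := by
        rw [hg, Category.comp_id, Category.id_comp]
    _ = (𝟙 _ ⊗ₘ T.η.app B) ≫ (T.map f ⊗ₘ T.map g) ≫ M.φ A' B' := by
        rw [← tensorHom_comp_tensorHom, Category.assoc]
    _ = cstr T M A B ≫ T.map (f ⊗ₘ g) := by
        rw [M.φ_natural, cstr, Category.assoc]

lemma tstr_nat {A B A' B' : V} (f : A ⟶ A') (g : B ⟶ B') :
    (f ⊗ₘ T.map g) ≫ tstr T M A' B' = tstr T M A B ≫ T.map (f ⊗ₘ g) := by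
  have hf : f ≫ T.η.app A' = T.η.app A ≫ T.map f := by
    simpa using T.η.naturality f
  calc (f ⊗ₘ T.map g) ≫ tstr T M A' B'
      = ((f ≫ T.η.app A') ⊗ₘ (T.map g ≫ 𝟙 _)) ≫ M.φ A' B' := by
        rw [tstr, ← Category.assoc, tensorHom_comp_tensorHom]
    _ = ((T.η.app A ≫ T.map f) ⊗ₘ (𝟙 _ ≫ T.map g)) ≫ M.φ A' B' := by
        rw [hf, Category.comp_id, Category.id_comp]
    _ = (T.η.app A ⊗ₘ 𝟙 _) ≫ (T.map f ⊗ₘ T.map g) ≫ M.φ A' B' := by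
        rw [← tensorHom_comp_tensorHom, Category.assoc]
    _ = tstr T M A B ≫ T.map (f ⊗ₘ g) := by
        rw [M.φ_natural, tstr, Category.assoc]

lemma cstr_nat' {A A' : V} (B : V) (f : A ⟶ A') :
    (T.map f ⊗ₘ 𝟙 B) ≫ cstr T M A' B = cstr T M A B ≫ T.map (f ⊗ₘ 𝟙 B) :=
  cstr_nat T M f (𝟙 B)

lemma cstr_nat'' (A : V) {B B' : V} (g : B ⟶ B') :
    (𝟙 (T.obj A) ⊗ₘ g) ≫ cstr T M A B' = cstr T M A B ≫ T.map (𝟙 A ⊗ₘ g) := by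
  simpa using cstr_nat T M (𝟙 A) g

lemma tstr_nat' {A A' : V} (B : V) (f : A ⟶ A') :
    (f ⊗ₘ 𝟙 (T.obj B)) ≫ tstr T M A' B = tstr T M A B ≫ T.map (f ⊗ₘ 𝟙 B) := by
  simpa using tstr_nat T M f (𝟙 B)

lemma cstr_eta (A B : V) :
    (T.η.app A ⊗ₘ 𝟙 B) ≫ cstr T M A B = T.η.app (A ⊗ B) := by
  rw [cstr, ← Category.assoc, tensorHom_comp_tensorHom, Category.comp_id, Category.id_comp,
    M.η_tensor]

lemma tstr_eta (A B : V) :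
    (𝟙 A ⊗ₘ T.η.app B) ≫ tstr T M A B = T.η.app (A ⊗ B) := by
  rw [tstr, ← Category.assoc, tensorHom_comp_tensorHom, Category.comp_id, Category.id_comp,
    M.η_tensor]


end Strength

section S2
variable (T : Monad V) (M : SymMonoidalMonadStr V T)

lemma cstr_mu (A B : V) :
    (T.μ.app A ⊗ₘ 𝟙 B) ≫ cstr T M A B
      = cstr T M (T.obj A) B ≫ T.map (cstr T M A B) ≫ T.μ.app (A ⊗ B) := by
  have h1 : M.φ (T.obj A) B ≫ T.map (𝟙 (T.obj A) ⊗ₘ T.η.app B)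
      = (𝟙 (T.obj (T.obj A)) ⊗ₘ T.map (T.η.app B)) ≫ M.φ (T.obj A) (T.obj B) := by
    have := M.φ_natural (𝟙 (T.obj A)) (T.η.app B)
    simp only [CategoryTheory.Functor.map_id] at this
    exact this.symm
  have h1' := reassoc_of% h1
  have h2' := reassoc_of% (M.μ_tensor A B)
  symm
  calc cstr T M (T.obj A) B ≫ T.map (cstr T M A B) ≫ T.μ.app (A ⊗ B)
      = (𝟙 (T.obj (T.obj A)) ⊗ₘ T.η.app B) ≫ M.φ (T.obj A) B
          ≫ T.map (𝟙 (T.obj A) ⊗ₘ T.η.app B) ≫ T.map (M.φ A B) ≫ T.μ.app (A ⊗ B) := by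
        simp [cstr, Functor.map_comp]
    _ = (𝟙 (T.obj (T.obj A)) ⊗ₘ T.η.app B) ≫ (𝟙 (T.obj (T.obj A)) ⊗ₘ T.map (T.η.app B))
          ≫ M.φ (T.obj A) (T.obj B) ≫ T.map (M.φ A B) ≫ T.μ.app (A ⊗ B) := by
        rw [h1']
    _ = (𝟙 (T.obj (T.obj A)) ⊗ₘ T.η.app B) ≫ (𝟙 (T.obj (T.obj A)) ⊗ₘ T.map (T.η.app B))
          ≫ (T.μ.app A ⊗ₘ T.μ.app B) ≫ M.φ A B := by
        rw [M.μ_tensor A B]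
    _ = ((𝟙 (T.obj (T.obj A)) ≫ 𝟙 (T.obj (T.obj A)) ≫ T.μ.app A)
          ⊗ₘ (T.η.app B ≫ T.map (T.η.app B) ≫ T.μ.app B)) ≫ M.φ A B := by
        rw [← Category.assoc, ← Category.assoc, tensorHom_comp_tensorHom, tensorHom_comp_tensorHom,
          Category.assoc, Category.assoc]
    _ = (T.μ.app A ⊗ₘ (T.η.app B ≫ 𝟙 (T.obj B))) ≫ M.φ A B := by
        have := T.right_unit B
        simp only [Functor.id_obj] at this ⊢
        rw [this]
        simp
    _ = (T.μ.app A ⊗ₘ 𝟙 B) ≫ cstr T M A B := by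
        rw [cstr, ← Category.assoc, tensorHom_comp_tensorHom]
        simp

lemma comm1 (A B : V) :
    tstr T M (T.obj A) B ≫ T.map (cstr T M A B) ≫ T.μ.app (A ⊗ B) = M.φ A B := by
  have h1 : M.φ (T.obj A) B ≫ T.map (𝟙 (T.obj A) ⊗ₘ T.η.app B)
      = (𝟙 (T.obj (T.obj A)) ⊗ₘ T.map (T.η.app B)) ≫ M.φ (T.obj A) (T.obj B) := by
    have := M.φ_natural (𝟙 (T.obj A)) (T.η.app B)
    simp only [CategoryTheory.Functor.map_id] at this
    exact this.symm
  have h1' := reassoc_of% h1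
  have h2' := reassoc_of% (M.μ_tensor A B)
  calc tstr T M (T.obj A) B ≫ T.map (cstr T M A B) ≫ T.μ.app (A ⊗ B)
      = (T.η.app (T.obj A) ⊗ₘ 𝟙 (T.obj B)) ≫ M.φ (T.obj A) B
          ≫ T.map (𝟙 (T.obj A) ⊗ₘ T.η.app B) ≫ T.map (M.φ A B) ≫ T.μ.app (A ⊗ B) := by
        simp [tstr, cstr, Functor.map_comp]
    _ = (T.η.app (T.obj A) ⊗ₘ 𝟙 (T.obj B)) ≫ (𝟙 (T.obj (T.obj A)) ⊗ₘ T.map (T.η.app B))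
          ≫ (T.μ.app A ⊗ₘ T.μ.app B) ≫ M.φ A B := by
        rw [h1', M.μ_tensor A B]
    _ = ((T.η.app (T.obj A) ≫ 𝟙 (T.obj (T.obj A)) ≫ T.μ.app A)
          ⊗ₘ (𝟙 (T.obj B) ≫ T.map (T.η.app B) ≫ T.μ.app B)) ≫ M.φ A B := by
        rw [← Category.assoc, ← Category.assoc, tensorHom_comp_tensorHom, tensorHom_comp_tensorHom,
          Category.assoc, Category.assoc]
    _ = M.φ A B := by
        simp

lemma comm2 (A B : V) :
    cstr T M A (T.obj B) ≫ T.map (tstr T M A B) ≫ T.μ.app (A ⊗ B) = M.φ A B := by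
  have h1 : M.φ A (T.obj B) ≫ T.map (T.η.app A ⊗ₘ 𝟙 (T.obj B))
      = (T.map (T.η.app A) ⊗ₘ 𝟙 (T.obj (T.obj B))) ≫ M.φ (T.obj A) (T.obj B) := by
    have := M.φ_natural (T.η.app A) (𝟙 (T.obj B))
    simp only [CategoryTheory.Functor.map_id] at this
    exact this.symm
  have h1' := reassoc_of% h1
  have h2' := reassoc_of% (M.μ_tensor A B)
  calc cstr T M A (T.obj B) ≫ T.map (tstr T M A B) ≫ T.μ.app (A ⊗ B)
      = (𝟙 (T.obj A) ⊗ₘ T.η.app (T.obj B)) ≫ M.φ A (T.obj B)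
          ≫ T.map (T.η.app A ⊗ₘ 𝟙 (T.obj B)) ≫ T.map (M.φ A B) ≫ T.μ.app (A ⊗ B) := by
        simp [tstr, cstr, Functor.map_comp]
    _ = (𝟙 (T.obj A) ⊗ₘ T.η.app (T.obj B)) ≫ (T.map (T.η.app A) ⊗ₘ 𝟙 (T.obj (T.obj B)))
          ≫ (T.μ.app A ⊗ₘ T.μ.app B) ≫ M.φ A B := by
        rw [h1', M.μ_tensor A B]
    _ = ((𝟙 (T.obj A) ≫ T.map (T.η.app A) ≫ T.μ.app A)
          ⊗ₘ (T.η.app (T.obj B) ≫ 𝟙 (T.obj (T.obj B)) ≫ T.μ.app B)) ≫ M.φ A B := by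
        rw [← Category.assoc, ← Category.assoc, tensorHom_comp_tensorHom, tensorHom_comp_tensorHom,
          Category.assoc, Category.assoc]
    _ = M.φ A B := by
        simp
end S2

section S3
variable (T : Monad V) (M : SymMonoidalMonadStr V T)

lemma unrev_ptAct (X Y : V) (y : T.obj Y ⟶ Y) :
    unrev (ptAct T M X Y y) = cstr T M ((ihom X).obj Y) X ≫ T.map (rev X Y) ≫ y := by
  rw [ptAct, unrev_radj, cstr]
  simp [Category.assoc]

lemma unrev_THom (X Y : V) :
    unrev (THom T M X Y) = tstr T M ((ihom X).obj Y) X ≫ T.map (rev X Y) := by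
  rw [THom, unrev_radj, tstr, Category.assoc]

lemma unrev_preHom {X X' : V} (x : X' ⟶ X) (Y : V) :
    unrev (preHom x Y) = (𝟙 ((ihom X).obj Y) ⊗ₘ x) ≫ rev X Y := by
  rw [preHom, unrev_radj, id_tensorHom]

lemma unrev_map_ptAct {Z X Y : V} (y : T.obj Y ⟶ Y) (k : Z ⟶ (ihom X).obj Y) :
    unrev (T.map k ≫ ptAct T M X Y y) = cstr T M Z X ≫ T.map (unrev k) ≫ y := by
  rw [unrev_comp, unrev_ptAct, ← Category.assoc, cstr_nat' T M X k, Category.assoc,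
    ← Category.assoc (T.map (k ⊗ₘ 𝟙 X)), ← Functor.map_comp]
  rfl

lemma unrev_comp_preHom {Z X X' Y : V} (k : Z ⟶ (ihom X).obj Y) (x : X' ⟶ X) :
    unrev (k ≫ preHom x Y) = (𝟙 Z ⊗ₘ x) ≫ unrev k := by
  rw [unrev_comp, unrev_preHom, unrev]
  simp only [← Category.assoc, tensorHom_comp_tensorHom, Category.comp_id, Category.id_comp]

lemma unrev_comp_THomMap {Z X Y : V} (y : T.obj Y ⟶ Y) (k : Z ⟶ (ihom X).obj Y) :
    unrev (k ≫ (THom T M X Y ≫ (ihom (T.obj X)).map y))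
      = tstr T M Z X ≫ T.map (unrev k) ≫ y := by
  rw [← Category.assoc, unrev_ihom_map, unrev_comp, unrev_THom, ← Category.assoc,
    tstr_nat' T M X k, Category.assoc, Category.assoc,
    ← Category.assoc (T.map (k ⊗ₘ 𝟙 X)), ← Functor.map_comp]
  rfl

lemma ptAct_unit (X : V) (Y : T.Algebra) :
    T.η.app ((ihom X).obj Y.A) ≫ ptAct T M X Y.A Y.a = 𝟙 ((ihom X).obj Y.A) := by
  apply unrev_injective
  rw [unrev_comp, unrev_ptAct, ← Category.assoc, cstr_eta]
  have h := T.η.naturality (rev X Y.A)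
  simp only [Functor.id_map] at h
  rw [← Category.assoc, ← h, Category.assoc, Y.unit]
  simp [unrev]

end S3

section S4
variable (T : Monad V) (M : SymMonoidalMonadStr V T)

lemma unrev_def {Z X Y : V} (k : Z ⟶ (ihom X).obj Y) :
    unrev k = (k ⊗ₘ 𝟙 X) ≫ rev X Y := rfl

lemma ptAct_assoc (X : V) (Y : T.Algebra) :
    T.μ.app ((ihom X).obj Y.A) ≫ ptAct T M X Y.A Y.a
      = T.map (ptAct T M X Y.A Y.a) ≫ ptAct T M X Y.A Y.a := by
  apply unrev_injective
  rw [unrev_map_ptAct, unrev_comp, unrev_ptAct]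
  have hμ : T.μ.app ((ihom X).obj Y.A ⊗ X) ≫ T.map (rev X Y.A)
      = T.map (T.map (rev X Y.A)) ≫ T.μ.app Y.A := by
    simpa using (T.μ.naturality (rev X Y.A)).symm
  have hμ' := reassoc_of% hμ
  have c1 := reassoc_of% (cstr_mu T M ((ihom X).obj Y.A) X)
  rw [c1, hμ', Y.assoc, Functor.map_comp, Functor.map_comp]
  simp only [Category.assoc]

lemma preHom_hom (X Y : T.Algebra) :
    T.map (preHom X.a Y.A) ≫ ptAct T M (T.obj X.A) Y.A Y.a
      = ptAct T M X.A Y.A Y.a ≫ preHom X.a Y.A := by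
  apply unrev_injective
  rw [unrev_map_ptAct, unrev_comp_preHom, unrev_ptAct, unrev_preHom, Functor.map_comp]
  have h := reassoc_of% (cstr_nat'' T M ((ihom X.A).obj Y.A) X.a)
  simp only [Category.assoc]
  rw [← h]

lemma THomMap_hom (X Y : T.Algebra) :
    T.map (THom T M X.A Y.A ≫ (ihom (T.obj X.A)).map Y.a)
        ≫ ptAct T M (T.obj X.A) Y.A Y.a
      = ptAct T M X.A Y.A Y.a ≫ (THom T M X.A Y.A ≫ (ihom (T.obj X.A)).map Y.a) := by
  apply unrev_injective
  have hμ : T.μ.app ((ihom X.A).obj Y.A ⊗ X.A) ≫ T.map (rev X.A Y.A)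
      = T.map (T.map (rev X.A Y.A)) ≫ T.μ.app Y.A := by
    simpa using (T.μ.naturality (rev X.A Y.A)).symm
  have hμ' := reassoc_of% hμ.symm
  have c1 := reassoc_of% (comm1 T M ((ihom X.A).obj Y.A) X.A)
  have c2 := reassoc_of% (comm2 T M ((ihom X.A).obj Y.A) X.A)
  rw [unrev_map_ptAct, unrev_ihom_map, unrev_THom]
  -- LHS : cstr _ (T X.A) ≫ T.map ((tstr ≫ T.map rev) ≫ Y.a) ≫ Y.a
  rw [← Category.assoc (ptAct T M X.A Y.A Y.a), unrev_ihom_map, unrev_comp, unrev_THom]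
  -- RHS : ((ptAct ⊗ₘ 𝟙) ≫ (tstr ≫ T.map rev)) ≫ Y.a
  have tn := reassoc_of% (tstr_nat' T M X.A (ptAct T M X.A Y.A Y.a))
  simp only [Functor.map_comp, Category.assoc]
  rw [tn, ← Category.assoc (T.map (ptAct T M X.A Y.A Y.a ⊗ₘ 𝟙 X.A)), ← Functor.map_comp,
    ← unrev_def, unrev_ptAct]
  simp only [Functor.map_comp, Category.assoc]
  rw [← Y.assoc, hμ', c1, c2]

lemma cond_iff (X Y Z : T.Algebra) (f : Z.A ⊗ X.A ⟶ Y.A) :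
    M.φ Z.A X.A ≫ T.map f ≫ Y.a = (Z.a ⊗ₘ X.a) ≫ f ↔
      ((cstr T M Z.A X.A ≫ T.map f ≫ Y.a = (Z.a ⊗ₘ 𝟙 X.A) ≫ f) ∧
       (tstr T M Z.A X.A ≫ T.map f ≫ Y.a = (𝟙 Z.A ⊗ₘ X.a) ≫ f)) := by
  constructor
  · intro h
    constructor
    · rw [cstr, Category.assoc, h, ← Category.assoc, tensorHom_comp_tensorHom, Category.id_comp,
        X.unit]
    · rw [tstr, Category.assoc, h, ← Category.assoc, tensorHom_comp_tensorHom, Category.id_comp,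
        Z.unit]
  · rintro ⟨h1, h2⟩
    have hμf : T.μ.app (Z.A ⊗ X.A) ≫ T.map f = T.map (T.map f) ≫ T.μ.app Y.A := by
      simpa using (T.μ.naturality f).symm
    have hμf' := reassoc_of% hμf
    have tn := reassoc_of% (tstr_nat' T M X.A Z.a)
    conv_lhs => rw [← comm1 T M Z.A X.A]
    simp only [Category.assoc]
    rw [hμf', Y.assoc, ← Category.assoc (T.map (cstr T M Z.A X.A)), ← Functor.map_comp,
      ← Category.assoc (T.map (cstr T M Z.A X.A ≫ T.map f)), ← Functor.map_comp,
      Category.assoc, h1, Functor.map_comp]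
    simp only [Category.assoc]
    rw [← tn, h2, ← Category.assoc, tensorHom_comp_tensorHom]
    simp

end S4

/-- for `T`-algebras `(X,x)` and `(Y,y)`, the morphisms
`[x,1_Y]` and `[1_{TX},y] ∘ T_{X,Y} : [X,Y] ⟶ [TX,Y]` are `T`-algebra morphisms for
the pointwise actions, and if `H` denotes their equalizer in `V^T` then, naturally in
a `T`-algebra `(Z,z)`, morphisms of algebras `(Z,z) ⟶ H` are in bijection with
morphisms `f : Z ⊗ X ⟶ Y` of `V` satisfying `y ∘ Tf ∘ φ_{Z,X} = f ∘ (z ⊗ x)`. -/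
theorem algebra_hom_equalizer_bijection [HasEqualizers V]
    (T : Monad V) (M : SymMonoidalMonadStr V T) (X Y : T.Algebra) :
    ∃ (h₁ : T.η.app ((ihom X.A).obj Y.A) ≫ ptAct T M X.A Y.A Y.a
        = 𝟙 ((ihom X.A).obj Y.A))
      (h₂ : T.μ.app ((ihom X.A).obj Y.A) ≫ ptAct T M X.A Y.A Y.a
        = T.map (ptAct T M X.A Y.A Y.a) ≫ ptAct T M X.A Y.A Y.a)
      (h₁' : T.η.app ((ihom (T.obj X.A)).obj Y.A) ≫ ptAct T M (T.obj X.A) Y.A Y.a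
        = 𝟙 ((ihom (T.obj X.A)).obj Y.A))
      (h₂' : T.μ.app ((ihom (T.obj X.A)).obj Y.A) ≫ ptAct T M (T.obj X.A) Y.A Y.a
        = T.map (ptAct T M (T.obj X.A) Y.A Y.a) ≫ ptAct T M (T.obj X.A) Y.A Y.a)
      (hm₁ : T.map (preHom X.a Y.A) ≫ ptAct T M (T.obj X.A) Y.A Y.a
        = ptAct T M X.A Y.A Y.a ≫ preHom X.a Y.A)
      (hm₂ : T.map (THom T M X.A Y.A ≫ (ihom (T.obj X.A)).map Y.a)
          ≫ ptAct T M (T.obj X.A) Y.A Y.a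
        = ptAct T M X.A Y.A Y.a ≫ (THom T M X.A Y.A ≫ (ihom (T.obj X.A)).map Y.a)),
      ∀ (H : T.Algebra)
        (e : H ⟶ (⟨(ihom X.A).obj Y.A, ptAct T M X.A Y.A Y.a, h₁, h₂⟩ : T.Algebra))
        (w : e ≫ (⟨preHom X.a Y.A, hm₁⟩ :
              (⟨(ihom X.A).obj Y.A, ptAct T M X.A Y.A Y.a, h₁, h₂⟩ : T.Algebra) ⟶
              (⟨(ihom (T.obj X.A)).obj Y.A, ptAct T M (T.obj X.A) Y.A Y.a, h₁', h₂'⟩ :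
                T.Algebra))
            = e ≫ (⟨THom T M X.A Y.A ≫ (ihom (T.obj X.A)).map Y.a, hm₂⟩ :
              (⟨(ihom X.A).obj Y.A, ptAct T M X.A Y.A Y.a, h₁, h₂⟩ : T.Algebra) ⟶
              (⟨(ihom (T.obj X.A)).obj Y.A, ptAct T M (T.obj X.A) Y.A Y.a, h₁', h₂'⟩ :
                T.Algebra))),
        IsLimit (Fork.ofι e w) →
        ∃ (bij : ∀ Z : T.Algebra, (Z ⟶ H) ≃
            {f : Z.A ⊗ X.A ⟶ Y.A //
              M.φ Z.A X.A ≫ T.map f ≫ Y.a = (Z.a ⊗ₘ X.a) ≫ f}),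
          ∀ (Z Z' : T.Algebra) (g : Z' ⟶ Z) (h : Z ⟶ H),
            (bij Z' (g ≫ h)).val = (g.f ⊗ₘ 𝟙 X.A) ≫ (bij Z h).val := by
  refine ⟨ptAct_unit T M X.A Y, ptAct_assoc T M X.A Y, ptAct_unit T M (T.obj X.A) Y,
    ptAct_assoc T M (T.obj X.A) Y, preHom_hom T M X Y, THomMap_hom T M X Y, ?_⟩
  intro H e w hI
  have eh : T.map e.f ≫ ptAct T M X.A Y.A Y.a = H.a ≫ e.f := e.h
  have wf : e.f ≫ preHom X.a Y.A
      = e.f ≫ (THom T M X.A Y.A ≫ (ihom (T.obj X.A)).map Y.a) :=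
    congrArg Monad.Algebra.Hom.f w
  have fwd_prop : ∀ (Z : T.Algebra) (h : Z ⟶ H),
      M.φ Z.A X.A ≫ T.map (unrev (h.f ≫ e.f)) ≫ Y.a
        = (Z.a ⊗ₘ X.a) ≫ unrev (h.f ≫ e.f) := by
    intro Z h
    refine (cond_iff T M X Y Z _).mpr ⟨?_, ?_⟩
    · have hk : T.map (h.f ≫ e.f) ≫ ptAct T M X.A Y.A Y.a = Z.a ≫ (h.f ≫ e.f) := by
        rw [Functor.map_comp, Category.assoc, eh, ← Category.assoc, h.h, Category.assoc]
      calc cstr T M Z.A X.A ≫ T.map (unrev (h.f ≫ e.f)) ≫ Y.a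
          = unrev (T.map (h.f ≫ e.f) ≫ ptAct T M X.A Y.A Y.a) :=
            (unrev_map_ptAct T M Y.a _).symm
        _ = unrev (Z.a ≫ (h.f ≫ e.f)) := by rw [hk]
        _ = (Z.a ⊗ₘ 𝟙 X.A) ≫ unrev (h.f ≫ e.f) := unrev_comp _ _
    · have hq : (h.f ≫ e.f) ≫ preHom X.a Y.A
          = (h.f ≫ e.f) ≫ (THom T M X.A Y.A ≫ (ihom (T.obj X.A)).map Y.a) := by
        rw [Category.assoc, wf, Category.assoc]
      calc tstr T M Z.A X.A ≫ T.map (unrev (h.f ≫ e.f)) ≫ Y.a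
          = unrev ((h.f ≫ e.f) ≫ (THom T M X.A Y.A ≫ (ihom (T.obj X.A)).map Y.a)) :=
            (unrev_comp_THomMap T M Y.a _).symm
        _ = unrev ((h.f ≫ e.f) ≫ preHom X.a Y.A) := by rw [hq]
        _ = (𝟙 Z.A ⊗ₘ X.a) ≫ unrev (h.f ≫ e.f) := unrev_comp_preHom _ _
  have bwd_hom : ∀ (Z : T.Algebra) (f : Z.A ⊗ X.A ⟶ Y.A),
      M.φ Z.A X.A ≫ T.map f ≫ Y.a = (Z.a ⊗ₘ X.a) ≫ f →
      T.map (radj f) ≫ ptAct T M X.A Y.A Y.a = Z.a ≫ radj f := by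
    intro Z f hf
    apply unrev_injective
    rw [unrev_map_ptAct, unrev_comp, unrev_radj]
    exact ((cond_iff T M X Y Z f).mp hf).1
  have bwd_eq : ∀ (Z : T.Algebra) (f : Z.A ⊗ X.A ⟶ Y.A),
      M.φ Z.A X.A ≫ T.map f ≫ Y.a = (Z.a ⊗ₘ X.a) ≫ f →
      radj f ≫ preHom X.a Y.A
        = radj f ≫ (THom T M X.A Y.A ≫ (ihom (T.obj X.A)).map Y.a) := by
    intro Z f hf
    apply unrev_injective
    rw [unrev_comp_preHom, unrev_comp_THomMap, unrev_radj]
    exact ((cond_iff T M X Y Z f).mp hf).2.symm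
  refine ⟨fun Z =>
    { toFun := fun h => ⟨unrev (h.f ≫ e.f), fwd_prop Z h⟩
      invFun := fun p => (Fork.IsLimit.lift' hI
        ⟨radj p.val, bwd_hom Z p.val p.property⟩
        (Monad.Algebra.Hom.ext (bwd_eq Z p.val p.property))).val
      left_inv := ?_
      right_inv := ?_ }, ?_⟩
  · intro h
    apply Fork.IsLimit.hom_ext hI
    rw [(Fork.IsLimit.lift' hI _ _).prop]
    simp only [Fork.ι_ofι]
    apply Monad.Algebra.Hom.ext
    simp [radj_unrev]
  · intro p
    apply Subtype.ext
    have hp := (Fork.IsLimit.lift' hI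
      ⟨radj p.val, bwd_hom Z p.val p.property⟩
      (Monad.Algebra.Hom.ext (bwd_eq Z p.val p.property))).prop
    have hpf := congrArg Monad.Algebra.Hom.f hp
    simp only [Fork.ι_ofι, Monad.Algebra.comp_f] at hpf
    have goal : unrev ((Fork.IsLimit.lift' hI
        ⟨radj p.val, bwd_hom Z p.val p.property⟩
        (Monad.Algebra.Hom.ext (bwd_eq Z p.val p.property))).val.f ≫ e.f)
        = p.val := by
      rw [hpf, unrev_radj]
    exact goal
  · intro Z Z' g h
    show unrev ((g ≫ h).f ≫ e.f) = (g.f ⊗ₘ 𝟙 X.A) ≫ unrev (h.f ≫ e.f)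
    rw [Monad.Algebra.comp_f, Category.assoc, unrev_comp]
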